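/- In the assembly graph 1212, the N smoothings at vertex v1 compatible with the six HPPs e2(1A,2A), e2(1A,2B), e3(1B,2A), e3(1B,2B), e1(1B,2A), e1(1B,2B) transform their micronuclear sequences as follows (each resulting graph having a single transversal component): I0 M1 I1 M̄2 I2 M̄3 I3 ↦ I0 M_{1,2} I1 M̄3 I2; I0 M1 I1 M̄2 I2 M3 I3 ↦ I0 M_{1,2} I1 M3 I2; I0 M̄1 I1 M̄3 I2 M2 I3 ↦ I0 M_{3,1,2} I1; I0 M̄1 I1 M3 I2 M2 I3 ↦ I0 M̄3 I1 M_{1,2} I2; I0 M2 I1 M̄1 I2 M̄3 I3 ↦ I0 M̄_{2,1,3} I1; I0 M2 I1 M̄1 I2 M3 I3 ↦ I0 M̄_{2,1} I1 M3 I2. -/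

import Mathlib

/-!
Micronuclear sequences associated with assembly graphs (after C. Bisnath,
"Micronuclear Sequences Associated with Assembly Graphs").

We model an assembly graph with two rigid 4-valent vertices and two 1-valent
end vertices by the occurrence word of its (open) transversal: the transversal
visits v0, x1, x2, x3, x4, v3, where each xi is one of the two 4-valent
vertices (an element of `Fin 2`, with `0` standing for v1 and `1` for v2) and
each 4-valent vertex occurs exactly twice.  The five edges e0, ..., e4 are
enumerated along the transversal (edge `i` joins the `i`-th and `(i+1)`-st
visited vertices).  The rigid structure at a 4-valent vertex is the one making
the transversal go straight through it: the two edge-ends of one transversal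
passage are opposite, and ends belonging to different passages are neighbors.

The transversal is parametrised by the interval [0, 20]: the `j`-th visited
vertex sits at coordinate `4 * j` and edge `i` occupies `[4 * i, 4 * i + 4]`.

A Hamiltonian polygonal path (HPP) with chosen ends, denoted e_f(1x, 2y) in the
paper, is recorded by its full (middle) edge `f` together with the two ending
half-edge choices (`A` = on the incoming transversal edge of the other passage
at the corresponding vertex, `B` = on the outgoing one).  An edge can serve as
the full edge of an HPP iff both of its endpoints are 4-valent vertices
(i.e. 1 ≤ f ≤ 3) and they are distinct (so each 4-valent vertex is visited
exactly once).  Under the orientation convention Γ the HPP runs from the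
4-valent vertex v1 to the 4-valent vertex v2; the classes Γ^R, Γ^-, Γ^{-R}
reverse the orientation of the transversal, of the HPP, or of both.
-/

namespace AssemblyGraph

/-- Letters of a micronuclear sequence: `IES k` is the IES Iₖ, and `MDS i b`
is the MDS M_{i+1}, inverted (barred) iff `b = true`. -/
inductive Letter : Type
  | IES : Fin 4 → Letter
  | MDS : Fin 3 → Bool → Letter
  deriving DecidableEq, Repr

/-- A micronuclear sequence. -/
abbrev Word := List Letter

/-- Choice of an ending half-edge at a 4-valent vertex: on the incoming (`A`)
or on the outgoing (`B`) transversal edge of the other passage through that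
vertex.  At the initial vertex of the HPP, `A` is the label 1A and `B` is 1B;
at the final vertex they are the labels 2A and 2B. -/
inductive EndChoice : Type
  | A
  | B
  deriving DecidableEq, Repr

instance : Fintype EndChoice := ⟨{EndChoice.A, EndChoice.B}, by intro x; cases x <;> simp⟩

/-- The four orientation classes Γ, Γ^R, Γ⁻, Γ^{-R}. -/
inductive OrientClass : Type
  | G
  | GR
  | Gm
  | GmR
  deriving DecidableEq, Repr

instance : Fintype OrientClass :=
  ⟨{OrientClass.G, OrientClass.GR, OrientClass.Gm, OrientClass.GmR}, by intro x; cases x <;> simp⟩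

/-- The occurrence word of a transversal with two 4-valent vertices:
position `i` (for i = 0, ..., 3, the (i+1)-st visited vertex of the
transversal) ↦ which of the two 4-valent vertices sits there. -/
abbrev Occ := Fin 4 → Fin 2

/-- The assembly graph 1212: its transversal visits v0 v1 v2 v1 v2 v3. -/
def occ1212 : Occ := ![0, 1, 0, 1]

/-- The assembly graph 1221: its transversal visits v0 v1 v2 v2 v1 v3. -/
def occ1221 : Occ := ![0, 1, 1, 0]

/-- A candidate Hamiltonian polygonal path with chosen ends, e_f(1x, 2y):
the full (middle) edge `fullEdge = f`, the half-edge choice `ea = x` at the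
initial vertex and `eb = y` at the final vertex. -/
structure HPP : Type where
  fullEdge : Fin 5
  ea : EndChoice
  eb : EndChoice
  deriving DecidableEq, Repr, Fintype

/-- The 4-valent vertex at transversal position `i + 1`. -/
def occAt (w : Occ) (i : ℕ) : Fin 2 := w ⟨i % 4, by omega⟩

/-- The 4-valent vertex at which edge `f` (for 1 ≤ f ≤ 3) starts. -/
def tailV (w : Occ) (f : Fin 5) : Fin 2 := occAt w (f.1 - 1)

/-- The 4-valent vertex at which edge `f` (for 1 ≤ f ≤ 3) ends. -/
def headV (w : Occ) (f : Fin 5) : Fin 2 := occAt w f.1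

/-- `f` can be the full (middle) edge of a Hamiltonian polygonal path of `w`:
both endpoints of `f` are 4-valent vertices (1 ≤ f ≤ 3) and they are distinct,
so that the path visits every 4-valent vertex exactly once. -/
def IsFullEdge (w : Occ) (f : Fin 5) : Prop :=
  1 ≤ f.1 ∧ f.1 ≤ 3 ∧ tailV w f ≠ headV w f

instance (w : Occ) (f : Fin 5) : Decidable (IsFullEdge w f) := by
  unfold IsFullEdge; infer_instance

/-- The candidate `h` is an actual Hamiltonian polygonal path with chosen ends
of the graph `w` (the ending half-edges always admit the 2 × 2 choices). -/
def IsHPP (w : Occ) (h : HPP) : Prop := IsFullEdge w h.fullEdge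

instance (w : Occ) (h : HPP) : Decidable (IsHPP w h) := by
  unfold IsHPP; infer_instance

/-- The other transversal position (in 1, ..., 4) carrying the same 4-valent
vertex as position `p`. -/
def otherPos (w : Occ) (p : ℕ) : ℕ :=
  ((((List.range 4).map (· + 1)).find?
    fun q => decide (q ≠ p ∧ occAt w (q - 1) = occAt w (p - 1))).getD 0)

/-- A piece (segment) of the parametrised transversal [0, 20].  An MDS piece
(`isMDS = true`) records in `ord` the order (0, 1, 2 ↦ first, second, third)
in which the Γ-oriented HPP traverses it and in `dir` whether the HPP
traverses it in the direction of the transversal; for IES pieces these two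
fields are junk. -/
structure Piece : Type where
  lo : ℕ
  hi : ℕ
  isMDS : Bool
  ord : Fin 3
  dir : Bool
  deriving DecidableEq, Repr

/-- Insert a piece into a list of pieces sorted by left endpoint. -/
def insertPiece (p : Piece) : List Piece → List Piece
  | [] => [p]
  | q :: rest => if p.lo ≤ q.lo then p :: q :: rest else q :: insertPiece p rest

/-- The three MDS pieces cut out of the transversal by the HPP `h`, sorted
along the transversal: the full edge (traversed second), and the two ending
half-edges, lying on the incoming/outgoing (according to `ea`, `eb`) edge of
the other passage at the initial resp. final vertex of `h`.  The Γ-oriented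
HPP runs from v1 to v2, so it traverses the full edge in the direction of the
transversal iff the tail of the full edge is v1. -/
def hppPieces (w : Occ) (h : HPP) : List Piece :=
  let f := h.fullEdge.1
  let inc : Bool := decide (tailV w h.fullEdge = 0)
  let q := otherPos w (if inc then f else f + 1)
  let r := otherPos w (if inc then f + 1 else f)
  let fullSeg : Piece := ⟨4 * f, 4 * f + 4, true, 1, inc⟩
  let g1 : Piece := match h.ea with
    | .A => ⟨4 * q - 1, 4 * q, true, 0, true⟩
    | .B => ⟨4 * q, 4 * q + 1, true, 0, false⟩
  let g3 : Piece := match h.eb with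
    | .A => ⟨4 * r - 1, 4 * r, true, 2, false⟩
    | .B => ⟨4 * r, 4 * r + 1, true, 2, true⟩
  insertPiece g1 (insertPiece g3 [fullSeg])

/-- Fill the gaps between consecutive MDS pieces (and before the first and
after the last one) with IES pieces. -/
def fillGaps : ℕ → List Piece → List Piece
  | x, [] => [⟨x, 20, false, 0, true⟩]
  | x, m :: rest => ⟨x, m.lo, false, 0, true⟩ :: m :: fillGaps m.hi rest

/-- The seven pieces (four IES and three MDS pieces, alternating) into which
the HPP `h` divides the transversal of `w`, in transversal order. -/
def allPieces (w : Occ) (h : HPP) : List Piece := fillGaps 0 (hppPieces w h)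

/-- The MDS index, in orientation class `c`, of the MDS piece traversed
`o`-th by the Γ-oriented HPP (reversing the HPP reverses the order). -/
def classOrd (c : OrientClass) (o : Fin 3) : Fin 3 :=
  match c with
  | .G | .GR => o
  | .Gm | .GmR => ⟨2 - o.1, by omega⟩

/-- Whether an MDS piece whose Γ-direction flag is `d` is inverted (barred) in
orientation class `c`: the piece is barred iff the (possibly reversed) HPP
traverses it against the (possibly reversed) transversal. -/
def classBar (c : OrientClass) (d : Bool) : Bool :=
  match c with
  | .G | .GmR => !d
  | .GR | .Gm => d

/-- Read off the word of a list of pieces, numbering the IES pieces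
consecutively in reading order. -/
def wordAux (c : OrientClass) : ℕ → List Piece → Word
  | _, [] => []
  | k, p :: rest =>
    if p.isMDS then Letter.MDS (classOrd c p.ord) (classBar c p.dir) :: wordAux c k rest
    else Letter.IES ⟨k % 4, by omega⟩ :: wordAux c (k + 1) rest

/-- The micronuclear sequence of the HPP `h` of the graph `w` in orientation
class `c`: the labels of the seven pieces read along the transversal (reversed
for the classes Γ^R and Γ^{-R}). -/
def mnSeq (w : Occ) (c : OrientClass) (h : HPP) : Word :=
  wordAux c 0 (match c with
    | .G | .Gm => allPieces w h
    | .GR | .GmR => (allPieces w h).reverse)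

/-- The reverse complement of a micronuclear sequence: reverse the word,
interchange each Mᵢ with M̄ᵢ, and replace each Iₖ by I_{3-k}. -/
def revComp (u : Word) : Word :=
  u.reverse.map fun l => match l with
    | .IES k => .IES ⟨3 - k.1, by omega⟩
    | .MDS i b => .MDS i (!b)

/-- Whether the smoothing at the 4-valent vertex `v` (`0` = v1, `1` = v2)
compatible with the HPP `h` is parallel (P); otherwise it is non-parallel (N).
The compatible smoothing joins the full-edge end and the chosen half-edge end
at `v` (and the remaining two ends); it preserves the transversal orientation
(type P) iff these two ends consist of one incoming and one outgoing end.
Under the Γ convention the initial vertex of `h` is v1 and the final one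
is v2. -/
def smoothIsP (w : Occ) (h : HPP) (v : Fin 2) : Bool :=
  let inc : Bool := decide (tailV w h.fullEdge = 0)
  if v = 0 then (if inc then decide (h.ea = EndChoice.A) else decide (h.ea = EndChoice.B))
  else (if inc then decide (h.eb = EndChoice.B) else decide (h.eb = EndChoice.A))

/-- Smoothing a 4-valent vertex cuts the transversal at its two passages into
three strands S0, S1, S2, rejoined by the two smoothing arcs: a parallel (P)
smoothing joins the end of S0 to the start of S2 and closes S1 onto itself,
while a non-parallel (N) smoothing joins S0 to the reversal of S1 and that to
S2.  This graph on the three strands records which strands get joined. -/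
def strandGraph (isP : Bool) : SimpleGraph (Fin 3) :=
  SimpleGraph.fromRel fun i j =>
    if isP then i = 0 ∧ j = 2 else i.1 + 1 = j.1 ∨ j.1 + 1 = i.1

/-- The number of transverse components of the graph obtained from `w` by
performing the smoothing compatible with the HPP `h` at the vertex `v`. -/
noncomputable def numTransverseComponents (w : Occ) (h : HPP) (v : Fin 2) : ℕ :=
  Nat.card (strandGraph (smoothIsP w h v)).ConnectedComponent

/-- Letters of a micronuclear sequence after smoothing: `MDS l b` is the
merged MDS M_l (for example M_{1,2} is `MDS [0,1] false` and M̄_{2,1,3} is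
`MDS [1,0,2] true`), and `IES k` is the IES Iₖ of the new sequence. -/
inductive SLetter : Type
  | IES : ℕ → SLetter
  | MDS : List (Fin 3) → Bool → SLetter
  deriving DecidableEq, Repr

/-- The edge on which the chosen half-edge based at transversal position `p`
lies: the incoming edge `e_{p-1}` for choice `A`, the outgoing edge `e_p`
for choice `B`. -/
def hostEdge (c : EndChoice) (p : ℕ) : ℕ :=
  match c with
  | .A => p - 1
  | .B => p

/-- The two transversal positions (in 1, ..., 4) of the 4-valent vertex `v`. -/
def vertexPos (w : Occ) (v : Fin 2) : ℕ × ℕ :=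
  match ((List.range 4).map (· + 1)).filter (fun p => decide (occAt w (p - 1) = v)) with
  | [p, q] => (p, q)
  | _ => (0, 0)

/-- If the two ending half-edges of the HPP lie on one and the same edge
(they then carry the two aligned copies of a pointer), smoothing excises the
IES piece lying between them on that edge; this function removes that piece. -/
def excise (w : Occ) (h : HPP) (ps : List Piece) : List Piece :=
  let f := h.fullEdge.1
  let inc : Bool := decide (tailV w h.fullEdge = 0)
  let q := otherPos w (if inc then f else f + 1)
  let r := otherPos w (if inc then f + 1 else f)
  if hostEdge h.ea q = hostEdge h.eb r then
    let hiQ := 4 * q + (match h.ea with | .A => 0 | .B => 1)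
    let hiR := 4 * r + (match h.eb with | .A => 0 | .B => 1)
    let loQ := 4 * q - (match h.ea with | .A => 1 | .B => 0)
    let loR := 4 * r - (match h.eb with | .A => 1 | .B => 0)
    ps.filter fun p => p.isMDS || !(p.lo == min hiQ hiR && p.hi == max loQ loR)
  else ps

/-- Intermediate letters for reading off the smoothed sequence. -/
inductive Proto : Type
  | pI : Proto
  | pM : List (Fin 3) → Bool → Proto
  deriving DecidableEq, Repr

/-- The proto-letter of a piece; the Bool flag says whether the piece is
traversed backwards by the new transversal (which toggles barredness). -/
def protoOf (pr : Piece × Bool) : Proto :=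
  if pr.1.isMDS then .pM [pr.1.ord] (if pr.2 then pr.1.dir else !pr.1.dir) else .pI

/-- Merge consecutive MDS proto-letters (aligned MDSs recombine) and
consecutive IES proto-letters. -/
def mergeProtos : List Proto → List Proto
  | [] => []
  | [x] => [x]
  | .pI :: .pI :: rest => mergeProtos (.pI :: rest)
  | .pM l b :: .pM l' _ :: rest => mergeProtos (.pM (l ++ l') b :: rest)
  | x :: y :: rest => x :: mergeProtos (y :: rest)
termination_by l => l.length
decreasing_by all_goals simp

/-- Number the IES letters consecutively. -/
def slettersAux : ℕ → List Proto → List SLetter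
  | _, [] => []
  | k, .pI :: rest => .IES k :: slettersAux (k + 1) rest
  | k, .pM l b :: rest => .MDS l b :: slettersAux k rest

/-- The micronuclear sequence, in orientation class Γ, of the graph obtained
from `w` by performing the smoothing compatible with the HPP `h` at the
4-valent vertex `v`, read along the resulting transversal (for an N smoothing
the result is a single transversal running through S0, the reversed S1, and
S2, where S0, S1, S2 are the three strands into which the two passages of `v`
cut the old transversal).  Consecutive MDSs merge, and the IES between two
half-edges lying on a common edge is excised. -/
def smoothedSeq (w : Occ) (h : HPP) (v : Fin 2) : List SLetter :=
  let ps := excise w h (allPieces w h)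
  let c1 := 4 * (vertexPos w v).1
  let c2 := 4 * (vertexPos w v).2
  let s0 := ps.filter fun p => decide (p.hi ≤ c1)
  let s1 := ps.filter fun p => decide (c1 ≤ p.lo ∧ p.hi ≤ c2)
  let s2 := ps.filter fun p => decide (c2 ≤ p.lo)
  let items : List (Piece × Bool) :=
    s0.map (fun p => (p, false)) ++ s1.reverse.map (fun p => (p, true))
      ++ s2.map (fun p => (p, false))
  slettersAux 0 (mergeProtos (items.map protoOf))


lemma card_components_N : Nat.card (strandGraph false).ConnectedComponent = 1 := by
  have h01 : (strandGraph false).Adj 0 1 := by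
    simp [strandGraph, SimpleGraph.fromRel_adj]
  have h12 : (strandGraph false).Adj 1 2 := by
    simp [strandGraph, SimpleGraph.fromRel_adj]
  have hreach : ∀ v : Fin 3, (strandGraph false).Reachable v 0 := by
    intro v
    fin_cases v
    · exact SimpleGraph.Reachable.refl _
    · exact h01.symm.reachable
    · exact (h12.symm.reachable).trans h01.symm.reachable
  rw [Nat.card_eq_one_iff_unique]
  constructor
  · constructor
    intro a b
    refine a.ind fun u => b.ind fun v => ?_
    exact SimpleGraph.ConnectedComponent.sound ((hreach u).trans (hreach v).symm)
  · exact ⟨(strandGraph false).connectedComponentMk 0⟩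

lemma ntc_eq_one (w : Occ) (h : HPP) (v : Fin 2) (hP : smoothIsP w h v = false) :
    numTransverseComponents w h v = 1 := by
  unfold numTransverseComponents
  rw [hP]
  exact card_components_N

/-- In the assembly graph 1212, the N smoothings at vertex v1
compatible with the six HPPs e2(1A,2A), e2(1A,2B), e3(1B,2A), e3(1B,2B),
e1(1B,2A), e1(1B,2B) transform their micronuclear sequences as listed (each
resulting graph having a single transversal component):
I0 M1 I1 M̄2 I2 M̄3 I3 ↦ I0 M_{1,2} I1 M̄3 I2;
I0 M1 I1 M̄2 I2 M3 I3 ↦ I0 M_{1,2} I1 M3 I2;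
I0 M̄1 I1 M̄3 I2 M2 I3 ↦ I0 M_{3,1,2} I1;
I0 M̄1 I1 M3 I2 M2 I3 ↦ I0 M̄3 I1 M_{1,2} I2;
I0 M2 I1 M̄1 I2 M̄3 I3 ↦ I0 M̄_{2,1,3} I1;
I0 M2 I1 M̄1 I2 M3 I3 ↦ I0 M̄_{2,1} I1 M3 I2. -/
theorem graph1212_N_smoothings_at_v1 :
    (mnSeq occ1212 .G ⟨2, .A, .A⟩ = [.IES 0, .MDS 0 false, .IES 1, .MDS 1 true, .IES 2, .MDS 2 true, .IES 3] ∧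
      smoothIsP occ1212 ⟨2, .A, .A⟩ 0 = false ∧
      smoothedSeq occ1212 ⟨2, .A, .A⟩ 0 = [.IES 0, .MDS [0, 1] false, .IES 1, .MDS [2] true, .IES 2] ∧
      numTransverseComponents occ1212 ⟨2, .A, .A⟩ 0 = 1) ∧
    (mnSeq occ1212 .G ⟨2, .A, .B⟩ = [.IES 0, .MDS 0 false, .IES 1, .MDS 1 true, .IES 2, .MDS 2 false, .IES 3] ∧
      smoothIsP occ1212 ⟨2, .A, .B⟩ 0 = false ∧
      smoothedSeq occ1212 ⟨2, .A, .B⟩ 0 = [.IES 0, .MDS [0, 1] false, .IES 1, .MDS [2] false, .IES 2] ∧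
      numTransverseComponents occ1212 ⟨2, .A, .B⟩ 0 = 1) ∧
    (mnSeq occ1212 .G ⟨3, .B, .A⟩ = [.IES 0, .MDS 0 true, .IES 1, .MDS 2 true, .IES 2, .MDS 1 false, .IES 3] ∧
      smoothIsP occ1212 ⟨3, .B, .A⟩ 0 = false ∧
      smoothedSeq occ1212 ⟨3, .B, .A⟩ 0 = [.IES 0, .MDS [2, 0, 1] false, .IES 1] ∧
      numTransverseComponents occ1212 ⟨3, .B, .A⟩ 0 = 1) ∧
    (mnSeq occ1212 .G ⟨3, .B, .B⟩ = [.IES 0, .MDS 0 true, .IES 1, .MDS 2 false, .IES 2, .MDS 1 false, .IES 3] ∧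
      smoothIsP occ1212 ⟨3, .B, .B⟩ 0 = false ∧
      smoothedSeq occ1212 ⟨3, .B, .B⟩ 0 = [.IES 0, .MDS [2] true, .IES 1, .MDS [0, 1] false, .IES 2] ∧
      numTransverseComponents occ1212 ⟨3, .B, .B⟩ 0 = 1) ∧
    (mnSeq occ1212 .G ⟨1, .B, .A⟩ = [.IES 0, .MDS 1 false, .IES 1, .MDS 0 true, .IES 2, .MDS 2 true, .IES 3] ∧
      smoothIsP occ1212 ⟨1, .B, .A⟩ 0 = false ∧
      smoothedSeq occ1212 ⟨1, .B, .A⟩ 0 = [.IES 0, .MDS [1, 0, 2] true, .IES 1] ∧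
      numTransverseComponents occ1212 ⟨1, .B, .A⟩ 0 = 1) ∧
    (mnSeq occ1212 .G ⟨1, .B, .B⟩ = [.IES 0, .MDS 1 false, .IES 1, .MDS 0 true, .IES 2, .MDS 2 false, .IES 3] ∧
      smoothIsP occ1212 ⟨1, .B, .B⟩ 0 = false ∧
      smoothedSeq occ1212 ⟨1, .B, .B⟩ 0 = [.IES 0, .MDS [1, 0] true, .IES 1, .MDS [2] false, .IES 2] ∧
      numTransverseComponents occ1212 ⟨1, .B, .B⟩ 0 = 1) := by
  refine ⟨⟨by decide, by decide, by
      simp (config := { decide := true }) [smoothedSeq, excise, allPieces, hppPieces, fillGaps, insertPiece, otherPos, vertexPos,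
        protoOf, mergeProtos, slettersAux, occAt, tailV, headV, occ1212, hostEdge,
        List.find?, List.filter, List.range, List.range_succ], ntc_eq_one _ _ _ (by decide)⟩,
    ⟨by decide, by decide, by
      simp (config := { decide := true }) [smoothedSeq, excise, allPieces, hppPieces, fillGaps, insertPiece, otherPos, vertexPos,
        protoOf, mergeProtos, slettersAux, occAt, tailV, headV, occ1212, hostEdge,
        List.find?, List.filter, List.range, List.range_succ], ntc_eq_one _ _ _ (by decide)⟩,
    ⟨by decide, by decide, by
      simp (config := { decide := true }) [smoothedSeq, excise, allPieces, hppPieces, fillGaps, insertPiece, otherPos, vertexPos,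
        protoOf, mergeProtos, slettersAux, occAt, tailV, headV, occ1212, hostEdge,
        List.find?, List.filter, List.range, List.range_succ, List.range.loop], ntc_eq_one _ _ _ (by decide)⟩,
    ⟨by decide, by decide, by
      simp (config := { decide := true }) [smoothedSeq, excise, allPieces, hppPieces, fillGaps, insertPiece, otherPos, vertexPos,
        protoOf, mergeProtos, slettersAux, occAt, tailV, headV, occ1212, hostEdge,
        List.find?, List.filter, List.range, List.range_succ], ntc_eq_one _ _ _ (by decide)⟩,
    ⟨by decide, by decide, by
      simp (config := { decide := true }) [smoothedSeq, excise, allPieces, hppPieces, fillGaps, insertPiece, otherPos, vertexPos,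
        protoOf, mergeProtos, slettersAux, occAt, tailV, headV, occ1212, hostEdge,
        List.find?, List.filter, List.range, List.range_succ, List.range.loop], ntc_eq_one _ _ _ (by decide)⟩,
    ⟨by decide, by decide, by
      simp (config := { decide := true }) [smoothedSeq, excise, allPieces, hppPieces, fillGaps, insertPiece, otherPos, vertexPos,
        protoOf, mergeProtos, slettersAux, occAt, tailV, headV, occ1212, hostEdge,
        List.find?, List.filter, List.range, List.range_succ], ntc_eq_one _ _ _ (by decide)⟩⟩

end AssemblyGraph
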